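/- arXiv:2409.11671 — 5 statements merged into one kernel-verified Lean document; each statement's English description precedes it below -/
import Mathlib

section
/- Let α₁,…,αₙ ≥ 0 with α_sum = Σⱼ αⱼ > 0, and let t* > 0. For probability vectors b₁, b₂ ∈ ℝⁿ with all entries at least t*, define cond(b)ⱼ = αⱼbⱼ / (Σᵢ αᵢbᵢ). Then ‖cond(b₁) − cond(b₂)‖₁ ≤ (α_max / (t*·α_sum)) · ‖b₁ − b₂‖₁, where α_max = maxⱼ αⱼ. -/
/-- For a vector summing to zero, the sum of absolute values is twice the sum of
positive parts. -/
lemma sum_abs_eq_two_mul_sum_max {n : ℕ} (g : Fin n → ℝ) (h : ∑ j, g j = 0) :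
    ∑ j, |g j| = 2 * ∑ j, max (g j) 0 := by
  have h1 : ∑ j, |g j| = ∑ j, max (g j) 0 + ∑ j, max (-(g j)) 0 := by
    rw [← Finset.sum_add_distrib]
    exact Finset.sum_congr rfl fun j _ => (max_zero_add_max_neg_zero_eq_abs_self (g j)).symm
  have h2 : ∑ j, max (g j) 0 - ∑ j, max (-(g j)) 0 = 0 := by
    rw [← Finset.sum_sub_distrib]
    simpa [max_zero_sub_eq_self] using h
  linarith

/-- Core one-sided estimate for the conditioning map. -/
lemma cond_aux {n : ℕ} (α x y : Fin n → ℝ) (hα : ∀ j, 0 ≤ α j)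
    (hy : ∀ i, 0 ≤ y i)
    (hSx : 0 < ∑ i, α i * x i) (hSy : 0 < ∑ i, α i * y i)
    (hD : ∑ i, α i * y i ≤ ∑ i, α i * x i) :
    ∑ j, max (α j * x j / (∑ i, α i * x i) - α j * y j / (∑ i, α i * y i)) 0
      ≤ (∑ j, max (α j * (x j - y j)) 0) / (∑ i, α i * x i) := by
  set Sx := ∑ i, α i * x i with hSxdef
  set Sy := ∑ i, α i * y i with hSydef
  rw [Finset.sum_div]
  apply Finset.sum_le_sum
  intro j _
  have hid : α j * x j / Sx - α j * y j / Sy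
      = (α j * (x j - y j) - (α j * y j / Sy) * (Sx - Sy)) / Sx := by
    field_simp
    ring
  have hdnn : 0 ≤ (α j * y j / Sy) * (Sx - Sy) :=
    mul_nonneg (div_nonneg (mul_nonneg (hα j) (hy j)) hSy.le) (by linarith)
  have h1 : α j * x j / Sx - α j * y j / Sy ≤ max (α j * (x j - y j)) 0 / Sx := by
    rw [hid]
    apply div_le_div_of_nonneg_right ?_ hSx.le
    have := le_max_left (α j * (x j - y j)) 0
    linarith
  exact max_le h1 (div_nonneg (le_max_right _ 0) hSx.le)

/-- Lipschitz bound for the Bayesian conditioning map on belief vectors whose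
entries are all at least t*. -/
theorem cond_lipschitz_bound
    (n : ℕ) [NeZero n] (α : Fin n → ℝ) (hα : ∀ j, 0 ≤ α j)
    (αsum αmax : ℝ)
    (hαsum : αsum = ∑ j, α j) (hαsum_pos : 0 < αsum)
    (hαmax : αmax = Finset.univ.sup' Finset.univ_nonempty α)
    (t : ℝ) (ht : 0 < t)
    (b₁ b₂ : Fin n → ℝ)
    (hb₁_lb : ∀ i, t ≤ b₁ i) (hb₁_sum : ∑ i, b₁ i = 1)
    (hb₂_lb : ∀ i, t ≤ b₂ i) (hb₂_sum : ∑ i, b₂ i = 1) :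
    ∑ j, |α j * b₁ j / (∑ i, α i * b₁ i) - α j * b₂ j / (∑ i, α i * b₂ i)|
      ≤ (αmax / (t * αsum)) * ∑ j, |b₁ j - b₂ j| := by
  set S₁ := ∑ i, α i * b₁ i with hS₁def
  set S₂ := ∑ i, α i * b₂ i with hS₂def
  have hta : 0 < t * αsum := mul_pos ht hαsum_pos
  have hS₁_ge : t * αsum ≤ S₁ := by
    rw [hαsum, Finset.mul_sum, hS₁def]
    apply Finset.sum_le_sum
    intro i _
    calc t * α i = α i * t := mul_comm _ _
      _ ≤ α i * b₁ i := mul_le_mul_of_nonneg_left (hb₁_lb i) (hα i)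
  have hS₂_ge : t * αsum ≤ S₂ := by
    rw [hαsum, Finset.mul_sum, hS₂def]
    apply Finset.sum_le_sum
    intro i _
    calc t * α i = α i * t := mul_comm _ _
      _ ≤ α i * b₂ i := mul_le_mul_of_nonneg_left (hb₂_lb i) (hα i)
  have hS₁_pos : 0 < S₁ := lt_of_lt_of_le hta hS₁_ge
  have hS₂_pos : 0 < S₂ := lt_of_lt_of_le hta hS₂_ge
  have hαmax' : ∀ j, α j ≤ αmax := fun j => hαmax ▸ Finset.le_sup' α (Finset.mem_univ j)
  have hαmax_nn : 0 ≤ αmax := le_trans (hα 0) (hαmax' 0)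
  -- the difference of conditionals sums to zero
  have hsum_c : ∑ j, α j * b₁ j / S₁ = 1 := by
    rw [← Finset.sum_div]; exact div_self hS₁_pos.ne'
  have hsum_d : ∑ j, α j * b₂ j / S₂ = 1 := by
    rw [← Finset.sum_div]; exact div_self hS₂_pos.ne'
  have hf0 : ∑ j, (α j * b₁ j / S₁ - α j * b₂ j / S₂) = 0 := by
    rw [Finset.sum_sub_distrib, hsum_c, hsum_d]; ring
  set L := ∑ j, |b₁ j - b₂ j| with hLdef
  have hL_nn : 0 ≤ L := Finset.sum_nonneg fun j _ => abs_nonneg _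
  have hΔ0 : ∑ j, (b₁ j - b₂ j) = 0 := by
    rw [Finset.sum_sub_distrib, hb₁_sum, hb₂_sum]; ring
  have hΔ0' : ∑ j, (b₂ j - b₁ j) = 0 := by
    rw [Finset.sum_sub_distrib, hb₁_sum, hb₂_sum]; ring
  have hhalf : 2 * ∑ j, max (b₁ j - b₂ j) 0 = L := (sum_abs_eq_two_mul_sum_max _ hΔ0).symm
  have hhalf' : 2 * ∑ j, max (b₂ j - b₁ j) 0 = L := by
    rw [← (sum_abs_eq_two_mul_sum_max _ hΔ0'), hLdef]
    exact Finset.sum_congr rfl fun j _ => abs_sub_comm _ _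
  -- bound the weighted positive parts by αmax times the plain ones
  have hweight : ∀ (u : Fin n → ℝ),
      ∑ j, max (α j * u j) 0 ≤ αmax * ∑ j, max (u j) 0 := by
    intro u
    rw [Finset.mul_sum]
    apply Finset.sum_le_sum
    intro j _
    have h1 : max (α j * u j) 0 = α j * max (u j) 0 := by
      rw [mul_max_of_nonneg _ _ (hα j), mul_zero]
    rw [h1]
    exact mul_le_mul_of_nonneg_right (hαmax' j) (le_max_right _ 0)
  -- key estimate on the sum of positive parts
  have key : ∑ j, max (α j * b₁ j / S₁ - α j * b₂ j / S₂) 0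
      ≤ αmax * (L / 2) / (t * αsum) := by
    rcases le_total S₂ S₁ with hD | hD
    · calc ∑ j, max (α j * b₁ j / S₁ - α j * b₂ j / S₂) 0
          ≤ (∑ j, max (α j * (b₁ j - b₂ j)) 0) / S₁ :=
            cond_aux α b₁ b₂ hα (fun i => (ht.trans_le (hb₂_lb i)).le) hS₁_pos hS₂_pos hD
        _ ≤ (αmax * ∑ j, max (b₁ j - b₂ j) 0) / S₁ := by
            apply div_le_div_of_nonneg_right (hweight _) hS₁_pos.le
        _ = (αmax * (L / 2)) / S₁ := by rw [← hhalf]; ring_nf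
        _ ≤ αmax * (L / 2) / (t * αsum) := by
            apply div_le_div_of_nonneg_left (by positivity) hta hS₁_ge
    · -- symmetric case: sum of positive parts of f equals that of -f (both are half of ∑|f|)
      have hswap : ∑ j, max (α j * b₁ j / S₁ - α j * b₂ j / S₂) 0
          = ∑ j, max (α j * b₂ j / S₂ - α j * b₁ j / S₁) 0 := by
        have e1 := sum_abs_eq_two_mul_sum_max (fun j => α j * b₁ j / S₁ - α j * b₂ j / S₂) hf0
        have hf0' : ∑ j, (α j * b₂ j / S₂ - α j * b₁ j / S₁) = 0 := by
          rw [Finset.sum_sub_distrib, hsum_c, hsum_d]; ring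
        have e2 := sum_abs_eq_two_mul_sum_max (fun j => α j * b₂ j / S₂ - α j * b₁ j / S₁) hf0'
        have e3 : ∑ j, |α j * b₁ j / S₁ - α j * b₂ j / S₂|
            = ∑ j, |α j * b₂ j / S₂ - α j * b₁ j / S₁| :=
          Finset.sum_congr rfl fun j _ => abs_sub_comm _ _
        linarith
      rw [hswap]
      calc ∑ j, max (α j * b₂ j / S₂ - α j * b₁ j / S₁) 0
          ≤ (∑ j, max (α j * (b₂ j - b₁ j)) 0) / S₂ :=
            cond_aux α b₂ b₁ hα (fun i => (ht.trans_le (hb₁_lb i)).le) hS₂_pos hS₁_pos hD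
        _ ≤ (αmax * ∑ j, max (b₂ j - b₁ j) 0) / S₂ := by
            apply div_le_div_of_nonneg_right (hweight _) hS₂_pos.le
        _ = (αmax * (L / 2)) / S₂ := by rw [← hhalf']; ring_nf
        _ ≤ αmax * (L / 2) / (t * αsum) := by
            apply div_le_div_of_nonneg_left (by positivity) hta hS₂_ge
  have habs := sum_abs_eq_two_mul_sum_max
    (fun j => α j * b₁ j / S₁ - α j * b₂ j / S₂) hf0
  rw [habs]
  have hfinal : 2 * (αmax * (L / 2) / (t * αsum)) = (αmax / (t * αsum)) * L := by
    field_simp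
  linarith
end

section
/- Let T be an n×n row-stochastic matrix with all entries at least t* > 0, and let α₁,…,αₙ ≥ 0 with α_sum = Σⱼ αⱼ > 0 and α_max = maxⱼ αⱼ. Define τ(b) = Tᵀ·cond(b) where cond(b)ⱼ = αⱼbⱼ/(Σᵢ αᵢbᵢ). Then for any probability vectors b₁, b₂ with all entries at least t*, ‖τ(b₁) − τ(b₂)‖₁ ≤ ((1 − n·t*)·α_max / (t*·α_sum)) · ‖b₁ − b₂‖₁. -/
private lemma sum_abs_of_sum_zero {n : ℕ} (x : Fin n → ℝ) (h : ∑ i, x i = 0) :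
    ∑ i, |x i| = 2 * ∑ i, max (x i) 0 := by
  have e : ∀ i, |x i| = 2 * max (x i) 0 - x i := by
    intro i
    rcases le_total 0 (x i) with h' | h'
    · rw [abs_of_nonneg h', max_eq_left h']; ring
    · rw [abs_of_nonpos h', max_eq_right h']; ring
  calc ∑ i, |x i| = ∑ i, (2 * max (x i) 0 - x i) := by simp_rw [e]
    _ = 2 * ∑ i, max (x i) 0 - ∑ i, x i := by
        rw [Finset.sum_sub_distrib, Finset.mul_sum]
    _ = 2 * ∑ i, max (x i) 0 := by rw [h, sub_zero]

private lemma cond_key {n : ℕ} (α b₁ b₂ : Fin n → ℝ) (αmax : ℝ)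
    (hαle : ∀ i, α i ≤ αmax) (hαmax0 : 0 ≤ αmax)
    (hα : ∀ i, 0 ≤ α i) (hb₂ : ∀ i, 0 ≤ b₂ i)
    (S₁ S₂ : ℝ) (hS₁ : S₁ = ∑ k, α k * b₁ k) (hS₂ : S₂ = ∑ k, α k * b₂ k)
    (hS₁pos : 0 < S₁) (hS₂pos : 0 < S₂) (hle : S₂ ≤ S₁)
    (hsum : ∑ i, b₁ i = ∑ i, b₂ i) :
    ∑ i, |α i * b₁ i / S₁ - α i * b₂ i / S₂|
      ≤ αmax * (∑ i, |b₁ i - b₂ i|) / S₁ := by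
  have hd0 : ∑ i, (b₁ i - b₂ i) = 0 := by
    rw [Finset.sum_sub_distrib, hsum, sub_self]
  have hc0 : ∑ i, (α i * b₁ i / S₁ - α i * b₂ i / S₂) = 0 := by
    rw [Finset.sum_sub_distrib, ← Finset.sum_div, ← Finset.sum_div, ← hS₁, ← hS₂,
      div_self hS₁pos.ne', div_self hS₂pos.ne', sub_self]
  rw [sum_abs_of_sum_zero _ hc0, sum_abs_of_sum_zero _ hd0]
  have hpt : ∀ i, max (α i * b₁ i / S₁ - α i * b₂ i / S₂) 0
      ≤ αmax * max (b₁ i - b₂ i) 0 / S₁ := by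
    intro i
    have hrhs0 : 0 ≤ αmax * max (b₁ i - b₂ i) 0 / S₁ :=
      div_nonneg (mul_nonneg hαmax0 (le_max_right _ _)) hS₁pos.le
    refine max_le ?_ hrhs0
    have iden : α i * b₁ i / S₁ - α i * b₂ i / S₂
        = α i * (b₁ i - b₂ i) / S₁ - (α i * b₂ i) * (S₁ - S₂) / (S₁ * S₂) := by
      field_simp
      ring
    have h1 : 0 ≤ (α i * b₂ i) * (S₁ - S₂) / (S₁ * S₂) :=
      div_nonneg (mul_nonneg (mul_nonneg (hα i) (hb₂ i)) (sub_nonneg.2 hle))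
        (mul_nonneg hS₁pos.le hS₂pos.le)
    have h2 : α i * (b₁ i - b₂ i) ≤ αmax * max (b₁ i - b₂ i) 0 :=
      le_trans (mul_le_mul_of_nonneg_left (le_max_left _ _) (hα i))
        (mul_le_mul_of_nonneg_right (hαle i) (le_max_right _ _))
    calc α i * b₁ i / S₁ - α i * b₂ i / S₂
        = α i * (b₁ i - b₂ i) / S₁ - (α i * b₂ i) * (S₁ - S₂) / (S₁ * S₂) := iden
      _ ≤ α i * (b₁ i - b₂ i) / S₁ := by linarith
      _ ≤ αmax * max (b₁ i - b₂ i) 0 / S₁ := by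
          exact div_le_div_of_nonneg_right h2 hS₁pos.le |>.trans_eq rfl
  calc 2 * ∑ i, max (α i * b₁ i / S₁ - α i * b₂ i / S₂) 0
      ≤ 2 * ∑ i, αmax * max (b₁ i - b₂ i) 0 / S₁ := by
        exact mul_le_mul_of_nonneg_left (Finset.sum_le_sum fun i _ => hpt i)
          (by norm_num)
    _ = αmax * (2 * ∑ i, max (b₁ i - b₂ i) 0) / S₁ := by
        rw [← Finset.sum_div, ← Finset.mul_sum]
        ring

/-- Contraction bound for the full belief update τ(b) = Tᵀ·cond(b). -/
theorem tau_contraction_bound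
    (n : ℕ) [NeZero n] (T : Matrix (Fin n) (Fin n) ℝ) (t : ℝ) (ht : 0 < t)
    (hT_entries : ∀ i j, t ≤ T i j)
    (hT_rows : ∀ i, ∑ j, T i j = 1)
    (α : Fin n → ℝ) (hα : ∀ j, 0 ≤ α j)
    (αsum αmax : ℝ)
    (hαsum : αsum = ∑ j, α j) (hαsum_pos : 0 < αsum)
    (hαmax : αmax = Finset.univ.sup' Finset.univ_nonempty α)
    (b₁ b₂ : Fin n → ℝ)
    (hb₁_lb : ∀ i, t ≤ b₁ i) (hb₁_sum : ∑ i, b₁ i = 1)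
    (hb₂_lb : ∀ i, t ≤ b₂ i) (hb₂_sum : ∑ i, b₂ i = 1) :
    ∑ j, |(∑ i, T i j * (α i * b₁ i / (∑ k, α k * b₁ k)))
          - (∑ i, T i j * (α i * b₂ i / (∑ k, α k * b₂ k)))|
      ≤ ((1 - (n : ℝ) * t) * αmax / (t * αsum)) * ∑ j, |b₁ j - b₂ j| := by
  set S₁ : ℝ := ∑ k, α k * b₁ k with hS₁def
  set S₂ : ℝ := ∑ k, α k * b₂ k with hS₂def
  have htα : 0 < t * αsum := mul_pos ht hαsum_pos
  have hS₁lb : t * αsum ≤ S₁ := by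
    have : t * αsum = ∑ k, α k * t := by
      rw [hαsum, Finset.mul_sum]; simp_rw [mul_comm]
    rw [this]
    exact Finset.sum_le_sum fun k _ => mul_le_mul_of_nonneg_left (hb₁_lb k) (hα k)
  have hS₂lb : t * αsum ≤ S₂ := by
    have : t * αsum = ∑ k, α k * t := by
      rw [hαsum, Finset.mul_sum]; simp_rw [mul_comm]
    rw [this]
    exact Finset.sum_le_sum fun k _ => mul_le_mul_of_nonneg_left (hb₂_lb k) (hα k)
  have hS₁pos : 0 < S₁ := lt_of_lt_of_le htα hS₁lb
  have hS₂pos : 0 < S₂ := lt_of_lt_of_le htα hS₂lb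
  have hαle : ∀ i, α i ≤ αmax := fun i => hαmax ▸ Finset.le_sup' α (Finset.mem_univ i)
  have hαmax0 : 0 ≤ αmax := le_trans (hα 0) (hαle 0)
  have hD0 : 0 ≤ ∑ j, |b₁ j - b₂ j| := Finset.sum_nonneg fun j _ => abs_nonneg _
  -- bound on conditioned distributions
  have hcond : ∑ i, |α i * b₁ i / S₁ - α i * b₂ i / S₂|
      ≤ αmax * (∑ j, |b₁ j - b₂ j|) / (t * αsum) := by
    rcases le_total S₂ S₁ with hle | hle
    · refine le_trans (cond_key α b₁ b₂ αmax hαle hαmax0 hα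
        (fun i => le_trans ht.le (hb₂_lb i)) S₁ S₂ hS₁def hS₂def hS₁pos hS₂pos hle
        (by rw [hb₁_sum, hb₂_sum])) ?_
      exact div_le_div_of_nonneg_left (mul_nonneg hαmax0 hD0) htα hS₁lb
    · have h := cond_key α b₂ b₁ αmax hαle hαmax0 hα
        (fun i => le_trans ht.le (hb₁_lb i)) S₂ S₁ hS₂def hS₁def hS₂pos hS₁pos hle
        (by rw [hb₁_sum, hb₂_sum])
      have e1 : ∑ i, |α i * b₂ i / S₂ - α i * b₁ i / S₁|
          = ∑ i, |α i * b₁ i / S₁ - α i * b₂ i / S₂| := by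
        simp_rw [abs_sub_comm]
      have e2 : ∑ i, |b₂ i - b₁ i| = ∑ j, |b₁ j - b₂ j| := by
        simp_rw [abs_sub_comm]
      rw [e1, e2] at h
      exact le_trans h (div_le_div_of_nonneg_left (mul_nonneg hαmax0 hD0) htα hS₂lb)
  -- sums of conditioned vectors are 1
  have hc₁sum : ∑ i, α i * b₁ i / S₁ = 1 := by
    rw [← Finset.sum_div, ← hS₁def, div_self hS₁pos.ne']
  have hc₂sum : ∑ i, α i * b₂ i / S₂ = 1 := by
    rw [← Finset.sum_div, ← hS₂def, div_self hS₂pos.ne']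
  have hnt : (n : ℝ) * t ≤ 1 := by
    have h0 := hT_rows 0
    have : ∑ j : Fin n, t ≤ ∑ j, T 0 j := Finset.sum_le_sum fun j _ => hT_entries 0 j
    rw [h0] at this
    simpa using this
  -- step 1: column-centering
  have hstep1 : ∑ j, |(∑ i, T i j * (α i * b₁ i / S₁)) - ∑ i, T i j * (α i * b₂ i / S₂)|
      ≤ (1 - (n : ℝ) * t) * ∑ i, |α i * b₁ i / S₁ - α i * b₂ i / S₂| := by
    have hj : ∀ j, |(∑ i, T i j * (α i * b₁ i / S₁)) - ∑ i, T i j * (α i * b₂ i / S₂)|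
        ≤ ∑ i, (T i j - t) * |α i * b₁ i / S₁ - α i * b₂ i / S₂| := by
      intro j
      have hrw : (∑ i, T i j * (α i * b₁ i / S₁)) - ∑ i, T i j * (α i * b₂ i / S₂)
          = ∑ i, (T i j - t) * (α i * b₁ i / S₁ - α i * b₂ i / S₂) := by
        simp_rw [sub_mul, mul_sub]
        rw [Finset.sum_sub_distrib, Finset.sum_sub_distrib, Finset.sum_sub_distrib,
          ← Finset.mul_sum, ← Finset.mul_sum, hc₁sum, hc₂sum]
        ring
      rw [hrw]
      refine le_trans (Finset.abs_sum_le_sum_abs _ _) ?_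
      refine Finset.sum_le_sum fun i _ => ?_
      rw [abs_mul, abs_of_nonneg (sub_nonneg.2 (hT_entries i j))]
    refine le_trans (Finset.sum_le_sum fun j _ => hj j) ?_
    rw [Finset.sum_comm]
    have : ∀ i : Fin n,
        ∑ j, (T i j - t) * |α i * b₁ i / S₁ - α i * b₂ i / S₂|
          = (1 - (n : ℝ) * t) * |α i * b₁ i / S₁ - α i * b₂ i / S₂| := by
      intro i
      rw [← Finset.sum_mul]
      congr 1
      rw [Finset.sum_sub_distrib, hT_rows i]
      simp [mul_comm]
    simp_rw [this]
    rw [← Finset.mul_sum]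
  have hnt0 : 0 ≤ 1 - (n : ℝ) * t := by linarith
  calc ∑ j, |(∑ i, T i j * (α i * b₁ i / S₁)) - ∑ i, T i j * (α i * b₂ i / S₂)|
      ≤ (1 - (n : ℝ) * t) * ∑ i, |α i * b₁ i / S₁ - α i * b₂ i / S₂| := hstep1
    _ ≤ (1 - (n : ℝ) * t) * (αmax * (∑ j, |b₁ j - b₂ j|) / (t * αsum)) :=
        mul_le_mul_of_nonneg_left hcond hnt0
    _ = ((1 - (n : ℝ) * t) * αmax / (t * αsum)) * ∑ j, |b₁ j - b₂ j| := by ring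
end

section
/- Let b, b' ∈ ℝⁿ be probability vectors with ‖b − b'‖₁ ≤ λ, and for each a in a finite set A₂ and each i ∈ [n] let πᵢ(a) ∈ [0,1] with Σₐ πᵢ(a) = 1 for each i. Let R : A₂ → ℝ with |R(a)| ≤ R_max for all a. Then |Σₐ (Σᵢ bᵢπᵢ(a))·R(a) − Σₐ (Σᵢ b'ᵢπᵢ(a))·R(a)| ≤ R_max · α_max · λ, where α_max = Σₐ maxᵢ πᵢ(a). -/
/-- Reward discrepancy bound: the expected rewards under two beliefs at
total-variation distance ≤ λ differ by at most R_max · α_max · λ. -/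
theorem reward_discrepancy_bound
    (n : ℕ) [NeZero n] (A₂ : Type*) [Fintype A₂]
    (b b' : Fin n → ℝ)
    (hb_nonneg : ∀ i, 0 ≤ b i) (hb_sum : ∑ i, b i = 1)
    (hb'_nonneg : ∀ i, 0 ≤ b' i) (hb'_sum : ∑ i, b' i = 1)
    (lam : ℝ) (htv : ∑ i, |b i - b' i| ≤ lam)
    (π : Fin n → A₂ → ℝ)
    (hπ_mem : ∀ i a, π i a ∈ Set.Icc (0 : ℝ) 1)
    (hπ_sum : ∀ i, ∑ a, π i a = 1)
    (R : A₂ → ℝ) (Rmax : ℝ) (hR : ∀ a, |R a| ≤ Rmax)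
    (αmax : ℝ)
    (hαmax : αmax = ∑ a, Finset.univ.sup' Finset.univ_nonempty (fun i => π i a)) :
    |(∑ a, (∑ i, b i * π i a) * R a) - (∑ a, (∑ i, b' i * π i a) * R a)|
      ≤ Rmax * αmax * lam := by
  set M : A₂ → ℝ := fun a => Finset.univ.sup' Finset.univ_nonempty (fun i => π i a) with hM
  have hM0 : ∀ a, 0 ≤ M a := fun a =>
    le_trans (hπ_mem ⟨0, Nat.pos_of_ne_zero (NeZero.ne n)⟩ a).1
      (Finset.le_sup' (fun i => π i a) (Finset.mem_univ _))
  have hMi : ∀ i a, π i a ≤ M a := fun i a =>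
    Finset.le_sup' (fun i => π i a) (Finset.mem_univ i)
  have hα0 : 0 ≤ αmax := by
    rw [hαmax]; exact Finset.sum_nonneg fun a _ => hM0 a
  have hRα : 0 ≤ Rmax * αmax := by
    rcases isEmpty_or_nonempty A₂ with h | h
    · have : αmax = 0 := by rw [hαmax]; simp
      simp [this]
    · exact mul_nonneg (le_trans (abs_nonneg _) (hR h.some)) hα0
  have key : |(∑ a, (∑ i, b i * π i a) * R a) - (∑ a, (∑ i, b' i * π i a) * R a)|
      ≤ ∑ a, (∑ i, |b i - b' i| * π i a) * |R a| := by
    rw [← Finset.sum_sub_distrib]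
    refine le_trans (Finset.abs_sum_le_sum_abs _ _) (Finset.sum_le_sum fun a _ => ?_)
    rw [← sub_mul, abs_mul, ← Finset.sum_sub_distrib]
    refine mul_le_mul_of_nonneg_right ?_ (abs_nonneg _)
    refine le_trans (Finset.abs_sum_le_sum_abs _ _) (Finset.sum_le_sum fun i _ => ?_)
    rw [← sub_mul, abs_mul, abs_of_nonneg (hπ_mem i a).1]
  calc |(∑ a, (∑ i, b i * π i a) * R a) - (∑ a, (∑ i, b' i * π i a) * R a)|
      ≤ ∑ a, (∑ i, |b i - b' i| * π i a) * |R a| := key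
    _ ≤ ∑ a, (∑ i, |b i - b' i| * M a) * Rmax := by
        refine Finset.sum_le_sum fun a _ => ?_
        refine mul_le_mul ?_ (hR a) (abs_nonneg _) ?_
        · exact Finset.sum_le_sum fun i _ =>
            mul_le_mul_of_nonneg_left (hMi i a) (abs_nonneg _)
        · exact Finset.sum_nonneg fun i _ => mul_nonneg (abs_nonneg _) (hM0 a)
    _ = Rmax * αmax * (∑ i, |b i - b' i|) := by
        rw [hαmax]
        simp_rw [← Finset.sum_mul]
        rw [← Finset.mul_sum]
        ring
    _ ≤ Rmax * αmax * lam := mul_le_mul_of_nonneg_left htv hRα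
end

section
/- Let T_A and T_D be n×n row-stochastic matrices, and let b₁', b₂' be probability vectors in ℝⁿ. Suppose all entries of T_A are at least t_a* > 0 and all entries of T_D are at least t_d* > 0. Then ‖T_Aᵀb₁' − T_Dᵀb₂'‖₁ ≤ (1 − n·max(t_a*, t_d*))·‖b₁' − b₂'‖₁ + ‖(T_A − T_D)ᵀ‖₁, where ‖Q‖₁ denotes the induced L1 matrix norm (maximum absolute column sum). -/
lemma contraction_aux (n : ℕ) (T : Matrix (Fin n) (Fin n) ℝ) (t : ℝ)
    (hE : ∀ i j, t ≤ T i j) (hR : ∀ i, ∑ j, T i j = 1)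
    (d : Fin n → ℝ) (hd : ∑ i, d i = 0) :
    ∑ j, |∑ i, T i j * d i| ≤ (1 - (n : ℝ) * t) * ∑ i, |d i| := by
  have key : ∀ j, |∑ i, T i j * d i| ≤ ∑ i, (T i j - t) * |d i| := by
    intro j
    have : ∑ i, T i j * d i = ∑ i, (T i j - t) * d i := by
      rw [Finset.sum_congr rfl (fun i _ => by ring : ∀ i ∈ Finset.univ,
        (T i j - t) * d i = T i j * d i - t * d i)]
      rw [Finset.sum_sub_distrib, ← Finset.mul_sum, hd]
      ring
    rw [this]
    calc |∑ i, (T i j - t) * d i| ≤ ∑ i, |(T i j - t) * d i| :=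
          Finset.abs_sum_le_sum_abs _ _
      _ ≤ ∑ i, (T i j - t) * |d i| := by
          apply Finset.sum_le_sum; intro i _
          rw [abs_mul, abs_of_nonneg (sub_nonneg.2 (hE i j))]
  calc ∑ j, |∑ i, T i j * d i| ≤ ∑ j, ∑ i, (T i j - t) * |d i| :=
        Finset.sum_le_sum fun j _ => key j
    _ = ∑ i, (1 - (n : ℝ) * t) * |d i| := by
        rw [Finset.sum_comm]
        apply Finset.sum_congr rfl; intro i _
        rw [← Finset.sum_mul]
        congr 1
        rw [Finset.sum_sub_distrib, hR i, Finset.sum_const, Finset.card_univ,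
          Fintype.card_fin, nsmul_eq_mul]
    _ = (1 - (n : ℝ) * t) * ∑ i, |d i| := by rw [Finset.mul_sum]

lemma main_aux (n : ℕ) [NeZero n] (TA TD : Matrix (Fin n) (Fin n) ℝ)
    (ta : ℝ)
    (hTA_entries : ∀ i j, ta ≤ TA i j) (hTA_rows : ∀ i, ∑ j, TA i j = 1)
    (b₁ b₂ : Fin n → ℝ)
    (hb₁_sum : ∑ i, b₁ i = 1)
    (hb₂_nonneg : ∀ i, 0 ≤ b₂ i) (hb₂_sum : ∑ i, b₂ i = 1) :
    ∑ j, |(∑ i, TA i j * b₁ i) - (∑ i, TD i j * b₂ i)|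
      ≤ (1 - (n : ℝ) * ta) * (∑ i, |b₁ i - b₂ i|)
        + Finset.univ.sup' Finset.univ_nonempty
            (fun j => ∑ i, |TA j i - TD j i|) := by
  set S := Finset.univ.sup' Finset.univ_nonempty
      (fun j => ∑ i, |TA j i - TD j i|) with hS
  have hdiff : ∀ j, (∑ i, TA i j * b₁ i) - (∑ i, TD i j * b₂ i)
      = (∑ i, TA i j * (b₁ i - b₂ i)) + ∑ i, (TA i j - TD i j) * b₂ i := by
    intro j
    rw [← Finset.sum_add_distrib, ← Finset.sum_sub_distrib]
    apply Finset.sum_congr rfl; intro i _; ring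
  have h1 : ∑ j, |∑ i, TA i j * (b₁ i - b₂ i)|
      ≤ (1 - (n : ℝ) * ta) * ∑ i, |b₁ i - b₂ i| := by
    apply contraction_aux n TA ta hTA_entries hTA_rows
    rw [Finset.sum_sub_distrib, hb₁_sum, hb₂_sum]; ring
  have h2 : ∑ j, |∑ i, (TA i j - TD i j) * b₂ i| ≤ S := by
    calc ∑ j, |∑ i, (TA i j - TD i j) * b₂ i|
        ≤ ∑ j, ∑ i, |TA i j - TD i j| * b₂ i := by
          apply Finset.sum_le_sum; intro j _
          calc |∑ i, (TA i j - TD i j) * b₂ i|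
              ≤ ∑ i, |(TA i j - TD i j) * b₂ i| := Finset.abs_sum_le_sum_abs _ _
            _ = ∑ i, |TA i j - TD i j| * b₂ i := by
                apply Finset.sum_congr rfl; intro i _
                rw [abs_mul, abs_of_nonneg (hb₂_nonneg i)]
      _ = ∑ i, b₂ i * ∑ j, |TA i j - TD i j| := by
          rw [Finset.sum_comm]
          apply Finset.sum_congr rfl; intro i _
          rw [Finset.mul_sum]
          apply Finset.sum_congr rfl; intro j _; ring
      _ ≤ ∑ i, b₂ i * S := by
          apply Finset.sum_le_sum; intro i _
          exact mul_le_mul_of_nonneg_left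
            (Finset.le_sup' (fun j => ∑ k, |TA j k - TD j k|) (Finset.mem_univ i))
            (hb₂_nonneg i)
      _ = S := by rw [← Finset.sum_mul, hb₂_sum, one_mul]
  calc ∑ j, |(∑ i, TA i j * b₁ i) - (∑ i, TD i j * b₂ i)|
      ≤ ∑ j, (|∑ i, TA i j * (b₁ i - b₂ i)| + |∑ i, (TA i j - TD i j) * b₂ i|) := by
        apply Finset.sum_le_sum; intro j _
        rw [hdiff j]; exact abs_add_le _ _
    _ = (∑ j, |∑ i, TA i j * (b₁ i - b₂ i)|)
        + ∑ j, |∑ i, (TA i j - TD i j) * b₂ i| := Finset.sum_add_distrib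
    _ ≤ (1 - (n : ℝ) * ta) * (∑ i, |b₁ i - b₂ i|) + S := add_le_add h1 h2

/-- Bound on the TV distance between updates under two different row-stochastic
matrices: contraction plus an additive term given by the induced L1 norm of the
difference of transposes (maximum absolute column sum). -/
theorem two_matrix_update_bound
    (n : ℕ) [NeZero n] (TA TD : Matrix (Fin n) (Fin n) ℝ)
    (ta td : ℝ) (hta : 0 < ta) (htd : 0 < td)
    (hTA_entries : ∀ i j, ta ≤ TA i j) (hTA_rows : ∀ i, ∑ j, TA i j = 1)
    (hTD_entries : ∀ i j, td ≤ TD i j) (hTD_rows : ∀ i, ∑ j, TD i j = 1)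
    (b₁ b₂ : Fin n → ℝ)
    (hb₁_nonneg : ∀ i, 0 ≤ b₁ i) (hb₁_sum : ∑ i, b₁ i = 1)
    (hb₂_nonneg : ∀ i, 0 ≤ b₂ i) (hb₂_sum : ∑ i, b₂ i = 1) :
    ∑ j, |(∑ i, TA i j * b₁ i) - (∑ i, TD i j * b₂ i)|
      ≤ (1 - (n : ℝ) * max ta td) * (∑ i, |b₁ i - b₂ i|)
        + Finset.univ.sup' Finset.univ_nonempty
            (fun j => ∑ i, |TA j i - TD j i|) := by
  rcases le_total td ta with h | h
  · rw [max_eq_left h]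
    exact main_aux n TA TD ta hTA_entries hTA_rows b₁ b₂ hb₁_sum hb₂_nonneg hb₂_sum
  · rw [max_eq_right h]
    have := main_aux n TD TA td hTD_entries hTD_rows b₂ b₁ hb₂_sum hb₁_nonneg hb₁_sum
    have e1 : ∀ j, |(∑ i, TD i j * b₂ i) - (∑ i, TA i j * b₁ i)|
        = |(∑ i, TA i j * b₁ i) - (∑ i, TD i j * b₂ i)| := fun j => abs_sub_comm _ _
    have e2 : ∀ i, |b₂ i - b₁ i| = |b₁ i - b₂ i| := fun i => abs_sub_comm _ _
    have e3 : ∀ j i, |TD j i - TA j i| = |TA j i - TD j i| := fun j i => abs_sub_comm _ _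
    simp only [e1, e2, e3] at this
    exact this
end

section
/- Let b₁, b₂ ∈ ℝⁿ be probability vectors with all entries at least t_min > 0, and α₁,…,αₙ ≥ 0 with α_sum = Σⱼαⱼ > 0 and α_max = maxⱼαⱼ. Then ‖cond(b₁) − cond(b₂)‖₁ ≤ (α_max/(t_min·α_sum))·‖b₁ − b₂‖₁, where cond(b)ⱼ = αⱼbⱼ/(Σᵢαᵢbᵢ), using the inequality |x/X − y/Y| ≤ (1/min(X,Y))·|x − y| valid when x/X, y/Y normalize probability vectors componentwise with X, Y ≥ t_min·α_sum. -/
/-- Lipschitz bound for conditioning under two beliefs whose entries are at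
least t_min: ‖cond(b₁) − cond(b₂)‖₁ ≤ (α_max/(t_min·α_sum))·‖b₁ − b₂‖₁. -/
theorem cond_lipschitz_tmin_bound
    (n : ℕ) [NeZero n] (α : Fin n → ℝ) (hα : ∀ j, 0 ≤ α j)
    (αsum αmax : ℝ)
    (hαsum : αsum = ∑ j, α j) (hαsum_pos : 0 < αsum)
    (hαmax : αmax = Finset.univ.sup' Finset.univ_nonempty α)
    (tmin : ℝ) (htmin : 0 < tmin)
    (b₁ b₂ : Fin n → ℝ)
    (hb₁_lb : ∀ i, tmin ≤ b₁ i) (hb₁_sum : ∑ i, b₁ i = 1)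
    (hb₂_lb : ∀ i, tmin ≤ b₂ i) (hb₂_sum : ∑ i, b₂ i = 1) :
    ∑ j, |α j * b₁ j / (∑ i, α i * b₁ i) - α j * b₂ j / (∑ i, α i * b₂ i)|
      ≤ (αmax / (tmin * αsum)) * ∑ j, |b₁ j - b₂ j| := by
  set X := ∑ i, α i * b₁ i with hXdef
  set Y := ∑ i, α i * b₂ i with hYdef
  have hm : 0 < tmin * αsum := mul_pos htmin hαsum_pos
  have hX : tmin * αsum ≤ X := by
    rw [hαsum, Finset.mul_sum]
    exact Finset.sum_le_sum fun i _ => by nlinarith [hα i, hb₁_lb i]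
  have hY : tmin * αsum ≤ Y := by
    rw [hαsum, Finset.mul_sum]
    exact Finset.sum_le_sum fun i _ => by nlinarith [hα i, hb₂_lb i]
  have hXpos : 0 < X := lt_of_lt_of_le hm hX
  have hYpos : 0 < Y := lt_of_lt_of_le hm hY
  have hαle : ∀ j, α j ≤ αmax := fun j => by
    rw [hαmax]; exact Finset.le_sup' α (Finset.mem_univ j)
  obtain ⟨j₀, -⟩ := (Finset.univ_nonempty (α := Fin n)).exists_mem
  have hαmax0 : 0 ≤ αmax := (hα j₀).trans (hαle j₀)
  set q : Fin n → ℝ := fun j => α j * b₂ j / Y with hqdef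
  have hqnonneg : ∀ j, 0 ≤ q j := fun j =>
    div_nonneg (mul_nonneg (hα j) ((htmin.le.trans (hb₂_lb j)))) hYpos.le
  have hqsum : ∑ j, q j = 1 := by
    simp only [hqdef, ← Finset.sum_div]
    rw [div_eq_one_iff_eq hYpos.ne']
  set S := X - Y with hSdef
  have hΔsum : ∑ k, (b₁ k - b₂ k) = 0 := by
    rw [Finset.sum_sub_distrib, hb₁_sum, hb₂_sum]; ring
  have hSsum : S = ∑ k, α k * (b₁ k - b₂ k) := by
    simp [hSdef, hXdef, hYdef, mul_sub, Finset.sum_sub_distrib]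
  set C := ∑ k, (αmax - α k) * |b₁ k - b₂ k| with hCdef
  -- key per-term identity and bound
  have key : ∀ j, |α j * b₁ j / X - α j * b₂ j / Y|
      ≤ (α j * |b₁ j - b₂ j| + q j * C) / X := by
    intro j
    have hid : α j * b₁ j / X - α j * b₂ j / Y
        = (α j * (b₁ j - b₂ j) - q j * S) / X := by
      simp only [hqdef, hSdef]
      field_simp
      ring
    rw [hid, abs_div, abs_of_pos hXpos]
    apply div_le_div_of_nonneg_right (c := X) ?_ hXpos.le |>.trans_eq rfl
    -- rewrite using sum-zero
    have hrw : α j * (b₁ j - b₂ j) - q j * S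
        = α j * (b₁ j - b₂ j) + q j * ∑ k, (αmax - α k) * (b₁ k - b₂ k) := by
      have : ∑ k, (αmax - α k) * (b₁ k - b₂ k)
          = αmax * (∑ k, (b₁ k - b₂ k)) - S := by
        rw [hSsum, Finset.mul_sum, ← Finset.sum_sub_distrib]
        exact Finset.sum_congr rfl fun k _ => by ring
      rw [this, hΔsum]; ring
    rw [hrw]
    refine (abs_add_le _ _).trans ?_
    have h1 : |α j * (b₁ j - b₂ j)| = α j * |b₁ j - b₂ j| := by
      rw [abs_mul, abs_of_nonneg (hα j)]
    have h2 : |q j * ∑ k, (αmax - α k) * (b₁ k - b₂ k)| ≤ q j * C := by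
      rw [abs_mul, abs_of_nonneg (hqnonneg j)]
      refine mul_le_mul_of_nonneg_left ?_ (hqnonneg j)
      refine (Finset.abs_sum_le_sum_abs _ _).trans ?_
      refine Finset.sum_le_sum fun k _ => ?_
      rw [abs_mul, abs_of_nonneg (by linarith [hαle k] : (0:ℝ) ≤ αmax - α k)]
    linarith
  calc ∑ j, |α j * b₁ j / X - α j * b₂ j / Y|
      ≤ ∑ j, (α j * |b₁ j - b₂ j| + q j * C) / X :=
        Finset.sum_le_sum fun j _ => key j
    _ = ((∑ j, α j * |b₁ j - b₂ j|) + C) / X := by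
        rw [← Finset.sum_div, Finset.sum_add_distrib, ← Finset.sum_mul, hqsum, one_mul]
    _ = (αmax * ∑ j, |b₁ j - b₂ j|) / X := by
        congr 1
        rw [hCdef, ← Finset.sum_add_distrib, Finset.mul_sum]
        exact Finset.sum_congr rfl fun k _ => by ring
    _ ≤ (αmax * ∑ j, |b₁ j - b₂ j|) / (tmin * αsum) := by
        exact div_le_div_of_nonneg_left
          (mul_nonneg hαmax0 (Finset.sum_nonneg fun j _ => abs_nonneg _)) hm hX
    _ = (αmax / (tmin * αsum)) * ∑ j, |b₁ j - b₂ j| := by ring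
end
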